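/- Let h(x) = h₀ + h₁x + ... + h_p x^{p−1} be a polynomial strictly positive on positive integers, ϑ > 0, and suppose c₁ h(|l|) e^{−ϑ|l|} ≤ C_l ≤ c₂ h(|l|) e^{−ϑ|l|} for all l ∈ ℤ\{0}, with C₀ = 0 and 0 < c₁ < c₂. Then there exists c₁₂ > 0 such that for all sufficiently large integers l: Ĉ_{l,2} := ∑_{k∈ℤ} C_k C_{l−k} ≥ ∑_{k=1}^{l−1} C_k C_{l−k} ≥ c₁₂ · l^{2p+1} e^{−ϑ l}. -/

import Mathlib

open Filter Finset

/-- If `C_l ≍ h(|l|) e^{−ϑ|l|}` with `h` a polynomial of degree `p`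
positive on the positive integers, `ϑ > 0` and `C_0 = 0`, then for all large `l`:
`Ĉ_{l,2} = ∑_k C_k C_{l−k} ≥ ∑_{k=1}^{l−1} C_k C_{l−k} ≥ c₁₂ l^{2p+1} e^{−ϑl}`. -/
theorem conv_lower_bound_exponential
    (C : ℤ → ℝ) (hC : ∀ l, 0 ≤ C l) (hC0 : C 0 = 0)
    (h : Polynomial ℝ) (p : ℕ) (hdeg : h.natDegree = p)
    (hpos : ∀ n : ℕ, 0 < n → 0 < h.eval (n : ℝ))
    (ϑ c₁ c₂ : ℝ) (hϑ : 0 < ϑ) (hc₁ : 0 < c₁) (hc₁₂ : c₁ < c₂)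
    (hlow : ∀ l : ℤ, l ≠ 0 → c₁ * h.eval |(l : ℝ)| * Real.exp (-ϑ * |(l : ℝ)|) ≤ C l)
    (hupp : ∀ l : ℤ, l ≠ 0 → C l ≤ c₂ * h.eval |(l : ℝ)| * Real.exp (-ϑ * |(l : ℝ)|)) :
    ∃ c₁₂ : ℝ, 0 < c₁₂ ∧ ∃ L : ℤ, ∀ l : ℤ, L ≤ l →
      (∑' k : ℤ, C k * C (l - k)) ≥ (∑ k ∈ Finset.Ioo (0 : ℤ) l, C k * C (l - k))
      ∧ (∑ k ∈ Finset.Ioo (0 : ℤ) l, C k * C (l - k))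
          ≥ c₁₂ * (l : ℝ) ^ (2 * p + 1) * Real.exp (-ϑ * (l : ℝ)) := by
  have hc₂ : 0 < c₂ := hc₁.trans hc₁₂
  -- Summability of the nat-indexed majorant
  have S1 : Summable (fun n : ℕ => h.eval (n : ℝ) * Real.exp (-ϑ * n)) := by
    have key : ∀ n : ℕ, h.eval (n : ℝ) * Real.exp (-ϑ * n)
        = ∑ i ∈ Finset.range (h.natDegree + 1),
            h.coeff i * ((n : ℝ) ^ i * (Real.exp (-ϑ)) ^ n) := by
      intro n
      rw [Polynomial.eval_eq_sum_range, Finset.sum_mul]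
      refine Finset.sum_congr rfl fun i _ => ?_
      rw [show (-ϑ * (n : ℝ)) = (n : ℝ) * (-ϑ) by ring, Real.exp_nat_mul]
      ring
    rw [funext key]
    refine summable_sum fun i _ => ?_
    exact (summable_pow_mul_geometric_of_norm_lt_one (R := ℝ) i
      (by rw [Real.norm_eq_abs, abs_of_pos (Real.exp_pos _)]
          exact Real.exp_lt_one_iff.mpr (neg_neg_of_pos hϑ))).mul_left _
  have habs : Summable (fun n : ℕ => c₂ * |h.eval (n : ℝ) * Real.exp (-ϑ * n)|) :=
    S1.abs.mul_left c₂
  have hbound : ∀ n : ℕ, n ≠ 0 →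
      C (n : ℤ) ≤ c₂ * |h.eval (n : ℝ) * Real.exp (-ϑ * n)| := by
    intro n hn
    have h1 := hupp (n : ℤ) (by exact_mod_cast hn)
    rw [Int.cast_natCast, Nat.abs_cast] at h1
    calc C (n : ℤ) ≤ c₂ * h.eval (n : ℝ) * Real.exp (-ϑ * n) := h1
      _ = c₂ * (h.eval (n : ℝ) * Real.exp (-ϑ * n)) := by ring
      _ ≤ c₂ * |h.eval (n : ℝ) * Real.exp (-ϑ * n)| :=
          mul_le_mul_of_nonneg_left (le_abs_self _) hc₂.le
  have hboundneg : ∀ n : ℕ, n ≠ 0 →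
      C (-(n : ℤ)) ≤ c₂ * |h.eval (n : ℝ) * Real.exp (-ϑ * n)| := by
    intro n hn
    have h1 := hupp (-(n : ℤ)) (by simpa using (show (n:ℤ) ≠ 0 by exact_mod_cast hn))
    rw [show (((-(n:ℤ)):ℤ):ℝ) = -((n:ℕ):ℝ) by push_cast; ring, abs_neg,
      Nat.abs_cast] at h1
    calc C (-(n : ℤ)) ≤ c₂ * h.eval (n : ℝ) * Real.exp (-ϑ * n) := h1
      _ = c₂ * (h.eval (n : ℝ) * Real.exp (-ϑ * n)) := by ring
      _ ≤ c₂ * |h.eval (n : ℝ) * Real.exp (-ϑ * n)| :=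
          mul_le_mul_of_nonneg_left (le_abs_self _) hc₂.le
  have hCsum : Summable C := by
    refine Summable.of_nat_of_neg ?_ ?_
    · refine Summable.of_nonneg_of_le (fun n => hC _) ?_ habs
      intro n
      rcases eq_or_ne n 0 with rfl | hn
      · simp only [Nat.cast_zero, hC0]
        positivity
      · exact hbound n hn
    · refine Summable.of_nonneg_of_le (fun n => hC _) ?_ habs
      intro n
      rcases eq_or_ne n 0 with rfl | hn
      · simp only [Nat.cast_zero, neg_zero, hC0]
        positivity
      · exact hboundneg n hn
  have hCM : ∀ k : ℤ, C k ≤ ∑' j : ℤ, C j := fun k =>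
    hCsum.le_tsum k fun j _ => hC j
  have hprod : ∀ l : ℤ, Summable (fun k : ℤ => C k * C (l - k)) := fun l =>
    Summable.of_nonneg_of_le (fun k => mul_nonneg (hC _) (hC _))
      (fun k => mul_le_mul_of_nonneg_left (hCM _) (hC k))
      (hCsum.mul_right _)
  -- the polynomial is eventually bounded below by half its leading term
  have hh0 : h ≠ 0 := by
    intro hz
    have := hpos 1 one_pos
    rw [hz] at this
    simp at this
  set a := h.leadingCoeff with hadef
  have hequiv := Polynomial.isEquivalent_atTop_lead h
  have hsmall : ∀ᶠ x : ℝ in atTop,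
      ‖h.eval x - a * x ^ p‖ ≤ (1/2) * ‖a * x ^ p‖ := by
    have := Asymptotics.isLittleO_iff.mp hequiv.isLittleO (c := 1/2) (by norm_num)
    rw [hdeg] at this
    simpa using this
  have ha : 0 < a := by
    rcases lt_trichotomy a 0 with hneg | hzero | hposi
    · exfalso
      obtain ⟨n, hn1, hn2⟩ :=
        (((tendsto_natCast_atTop_atTop (R := ℝ)).eventually hsmall).and
          (eventually_ge_atTop 1)).exists
      have hnp : (0 : ℝ) < (n : ℝ) ^ p := by
        have : (0:ℝ) < (n:ℝ) := by exact_mod_cast Nat.lt_of_lt_of_le Nat.zero_lt_one hn2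
        positivity
      rw [Real.norm_eq_abs, Real.norm_eq_abs,
        abs_of_nonpos (by nlinarith : a * (n : ℝ) ^ p ≤ 0)] at hn1
      have h3 := (abs_le.mp hn1).2
      have h4 := hpos n (Nat.lt_of_lt_of_le Nat.zero_lt_one hn2)
      nlinarith
    · exact absurd (Polynomial.leadingCoeff_eq_zero.mp hzero) hh0
    · exact hposi
  have hXbound : ∀ᶠ x : ℝ in atTop, (a/2) * x ^ p ≤ h.eval x := by
    filter_upwards [hsmall, eventually_ge_atTop (0:ℝ)] with x hx hx0
    rw [Real.norm_eq_abs, Real.norm_eq_abs,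
      abs_of_nonneg (by positivity : (0:ℝ) ≤ a * x ^ p)] at hx
    have := (abs_le.mp hx).1
    linarith
  obtain ⟨X0, hX0⟩ := eventually_atTop.mp hXbound
  set X : ℝ := max X0 1 with hXdef
  have hX1 : (1:ℝ) ≤ X := le_max_right _ _
  have hX : ∀ x : ℝ, X ≤ x → (a/2) * x ^ p ≤ h.eval x := fun x hx =>
    hX0 x ((le_max_left _ _).trans hx)
  refine ⟨c₁ ^ 2 * (a/2) ^ 2 / (8 * 4 ^ (2 * p)), by positivity, ⌈4 * X + 8⌉, ?_⟩
  intro l hl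
  have hlX : 4 * X + 8 ≤ (l : ℝ) := le_trans (Int.le_ceil _) (by exact_mod_cast hl)
  have hl0 : (0 : ℝ) < (l : ℝ) := by linarith
  have hl8 : (8 : ℤ) ≤ l := by exact_mod_cast (show (8:ℝ) ≤ (l:ℝ) by linarith)
  constructor
  · exact (hprod l).sum_le_tsum _ (fun k _ => mul_nonneg (hC _) (hC _))
  · set T : Finset ℤ := Finset.Ioc (l/4) (l/2) with hT
    have hsub : T ⊆ Finset.Ioo (0 : ℤ) l := by
      intro k hk
      rw [Finset.mem_Ioc] at hk
      rw [Finset.mem_Ioo]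
      omega
    set Q : ℝ := c₁ * ((a/2) * ((l:ℝ)/4) ^ p) with hQ
    have hQ0 : 0 ≤ Q := by positivity
    set b : ℝ := Q ^ 2 * Real.exp (-ϑ * (l : ℝ)) with hb
    have hb0 : 0 ≤ b := by positivity
    have hterm : ∀ k ∈ T, b ≤ C k * C (l - k) := by
      intro k hk
      rw [hT, Finset.mem_Ioc] at hk
      have h4k : (l : ℝ) < 4 * (k : ℝ) := by exact_mod_cast (show l < 4 * k by omega)
      have h2k : 2 * (k : ℝ) ≤ (l : ℝ) := by exact_mod_cast (show 2 * k ≤ l by omega)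
      have hk0 : (0 : ℝ) < (k : ℝ) := by linarith
      have hkq : (l : ℝ)/4 ≤ (k : ℝ) := by linarith
      have hlkq : (l : ℝ)/4 ≤ (l : ℝ) - (k : ℝ) := by linarith
      have hXl4 : X ≤ (l : ℝ)/4 := by linarith
      have hlk0 : (0 : ℝ) < (l : ℝ) - (k : ℝ) := by linarith
      have hq0 : (0 : ℝ) ≤ (l : ℝ)/4 := by linarith
      -- lower bound for C k
      have hCk : Q * Real.exp (-ϑ * (k : ℝ)) ≤ C k := by
        have h1 := hlow k (by omega : k ≠ 0)
        rw [abs_of_pos hk0] at h1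
        refine le_trans ?_ h1
        have heval : (a/2) * ((l:ℝ)/4) ^ p ≤ h.eval (k:ℝ) := by
          refine le_trans ?_ (hX _ (hXl4.trans hkq))
          gcongr
        rw [hQ]
        exact mul_le_mul_of_nonneg_right
          (mul_le_mul_of_nonneg_left heval hc₁.le) (Real.exp_pos _).le
      have hClk : Q * Real.exp (-ϑ * ((l : ℝ) - (k : ℝ))) ≤ C (l - k) := by
        have h1 := hlow (l - k) (by omega : l - k ≠ 0)
        have hcast : ((l - k : ℤ) : ℝ) = (l : ℝ) - (k : ℝ) := by push_cast; ring
        rw [hcast, abs_of_pos hlk0] at h1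
        refine le_trans ?_ h1
        have heval : (a/2) * ((l:ℝ)/4) ^ p ≤ h.eval ((l:ℝ) - (k:ℝ)) := by
          refine le_trans ?_ (hX _ (hXl4.trans hlkq))
          gcongr
        rw [hQ]
        exact mul_le_mul_of_nonneg_right
          (mul_le_mul_of_nonneg_left heval hc₁.le) (Real.exp_pos _).le
      have hexp : Real.exp (-ϑ * (k:ℝ)) * Real.exp (-ϑ * ((l:ℝ) - (k:ℝ)))
          = Real.exp (-ϑ * (l:ℝ)) := by
        rw [← Real.exp_add]; congr 1; ring
      calc b = (Q * Real.exp (-ϑ * (k : ℝ))) * (Q * Real.exp (-ϑ * ((l:ℝ) - (k:ℝ)))) := by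
              rw [hb, ← hexp]; ring
        _ ≤ C k * C (l - k) :=
            mul_le_mul hCk hClk (by positivity) (hC k)
    have hcard : (l : ℝ)/8 ≤ (T.card : ℝ) := by
      have h1 : (T.card : ℤ) = l/2 - l/4 := by
        rw [hT, Int.card_Ioc]
        omega
      have h2 : (l : ℝ) ≤ 8 * ((T.card : ℤ) : ℝ) := by
        exact_mod_cast (show l ≤ 8 * (T.card : ℤ) by rw [h1]; omega)
      push_cast at h2 ⊢
      linarith
    calc (∑ k ∈ Finset.Ioo (0:ℤ) l, C k * C (l - k))
        ≥ ∑ k ∈ T, C k * C (l - k) :=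
          Finset.sum_le_sum_of_subset_of_nonneg hsub
            (fun k _ _ => mul_nonneg (hC _) (hC _))
      _ ≥ T.card • b := Finset.card_nsmul_le_sum T _ b hterm
      _ = (T.card : ℝ) * b := nsmul_eq_mul _ _
      _ ≥ ((l : ℝ)/8) * b := mul_le_mul_of_nonneg_right hcard hb0
      _ = c₁ ^ 2 * (a/2) ^ 2 / (8 * 4 ^ (2 * p)) * (l : ℝ) ^ (2 * p + 1)
            * Real.exp (-ϑ * (l : ℝ)) := by
          rw [hb, hQ]
          have h4 : (4:ℝ) ^ (2*p) ≠ 0 := by positivity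
          simp only [div_pow]
          field_simp
          ring
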